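/- Let q be a prime power and K a finite field with q² elements, and let a, b, c, d ∈ K. The rational function g = (d^q·X³ + c^q·X² + b^q·X + a^q)/(a·X³ + b·X² + c·X + d) has degree 1 and permutes μ_{q+1} if and only if one of the following holds: (1) d = 0, c ≠ 0, b·c^q = a·b^q, and c^{q+1} = a^{q+1}; (2) d = 0, a = 0, and c^{q+1} ≠ b^{q+1}; (3) d ≠ 0, d^q·b ≠ a·c^q, d^q·c ≠ a·b^q, and ((d^q·c − a·b^q)/(d^q·b − a·c^q))^q · ((d^{q+1} − a^{q+1})/(d^q·b − a·c^q)) = (d^q·c − a·b^q)/(d^q·b − a·c^q); (4) d ≠ 0, d^q·b ≠ a·c^q, d^q·c = a·b^q, and (d^{q+1} − a^{q+1})/(d^q·b − a·c^q) = b^q/d^q, with this common value lying in μ_{q+1}. -/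

import Mathlib

open Polynomial

open scoped Classical

/-- The denominator polynomial `D(X) = a·X³ + b·X² + c·X + d`. -/
noncomputable def Dpoly {K : Type*} [Field K] (a b c d : K) : K[X] :=
  C a * X ^ 3 + C b * X ^ 2 + C c * X + C d

/-- The numerator polynomial `N(X) = d^q·X³ + c^q·X² + b^q·X + a^q`. -/
noncomputable def Npoly {K : Type*} [Field K] (q : ℕ) (a b c d : K) : K[X] :=
  C (d ^ q) * X ^ 3 + C (c ^ q) * X ^ 2 + C (b ^ q) * X + C (a ^ q)

/-- Numerator of `g = N/D` in lowest terms. -/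
noncomputable def numer₀ {K : Type*} [Field K] (q : ℕ) (a b c d : K) : K[X] :=
  Npoly q a b c d / EuclideanDomain.gcd (Npoly q a b c d) (Dpoly a b c d)

/-- Denominator of `g = N/D` in lowest terms. -/
noncomputable def denom₀ {K : Type*} [Field K] (q : ℕ) (a b c d : K) : K[X] :=
  Dpoly a b c d / EuclideanDomain.gcd (Npoly q a b c d) (Dpoly a b c d)

/-- The degree of the rational function `g = N/D`. -/
noncomputable def gDeg {K : Type*} [Field K] (q : ℕ) (a b c d : K) : ℕ :=
  max (numer₀ q a b c d).natDegree (denom₀ q a b c d).natDegree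

/-- `μ_{q+1} = {x ∈ K : x^{q+1} = 1}`. -/
def mu (q : ℕ) (K : Type*) [Monoid K] : Set K := {x : K | x ^ (q + 1) = 1}

/-- `g` permutes `μ_{q+1}`: the map `x ↦ N₀(x)·D₀(x)⁻¹` is a bijection of `μ_{q+1}`. -/
def gPermutes (q : ℕ) {K : Type*} [Field K] (a b c d : K) : Prop :=
  Set.BijOn (fun x => (numer₀ q a b c d).eval x * ((denom₀ q a b c d).eval x)⁻¹)
    (mu q K) (mu q K)

namespace Stmt0Proof

variable {K : Type*} [Field K]

lemma quad_mul_lin (p q r s t : K) :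
    (C p * X ^ 2 + C q * X + C r) * (C s * X + C t) =
      C (p * s) * X ^ 3 + C (p * t + q * s) * X ^ 2 + C (q * t + r * s) * X + C (r * t) := by
  simp only [C_mul, C_add]
  ring

lemma cubic_ext {a3 a2 a1 a0 b3 b2 b1 b0 : K}
    (h : C a3 * X ^ 3 + C a2 * X ^ 2 + C a1 * X + C a0 =
        C b3 * X ^ 3 + C b2 * X ^ 2 + C b1 * X + C b0) :
    a3 = b3 ∧ a2 = b2 ∧ a1 = b1 ∧ a0 = b0 := by
  refine ⟨?_, ?_, ?_, ?_⟩
  · simpa using congrArg (fun f : K[X] => f.coeff 3) h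
  · simpa using congrArg (fun f : K[X] => f.coeff 2) h
  · simpa using congrArg (fun f : K[X] => f.coeff 1) h
  · simpa using congrArg (fun f : K[X] => f.coeff 0) h

lemma cubic_eq_zero {a3 a2 a1 a0 : K}
    (h : C a3 * X ^ 3 + C a2 * X ^ 2 + C a1 * X + C a0 = 0) :
    a3 = 0 ∧ a2 = 0 ∧ a1 = 0 ∧ a0 = 0 := by
  have h' : C a3 * X ^ 3 + C a2 * X ^ 2 + C a1 * X + C a0 =
      C (0 : K) * X ^ 3 + C 0 * X ^ 2 + C 0 * X + C 0 := by
    rw [h]; simp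
  exact cubic_ext h'

lemma quad_ne_zero {p q r : K} (hp : p ≠ 0) : C p * X ^ 2 + C q * X + C r ≠ (0 : K[X]) :=
  fun h => hp (by simpa using congrArg (fun f : K[X] => f.coeff 2) h)

lemma coprime_linear {α β γ δ : K} (h : α * δ - β * γ ≠ 0) :
    IsCoprime (C α * X + C β) (C γ * X + C δ) := by
  refine ⟨C (-γ / (α * δ - β * γ)), C (α / (α * δ - β * γ)), ?_⟩
  have h1 : C (-γ / (α * δ - β * γ)) * (C α * X + C β) + C (α / (α * δ - β * γ)) * (C γ * X + C δ)
      = C ((-γ / (α * δ - β * γ)) * α + (α / (α * δ - β * γ)) * γ) * X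
        + C ((-γ / (α * δ - β * γ)) * β + (α / (α * δ - β * γ)) * δ) := by
    simp only [C_mul, C_add]
    ring
  rw [h1, show (-γ / (α * δ - β * γ)) * α + (α / (α * δ - β * γ)) * γ = 0 by field_simp; ring,
    show (-γ / (α * δ - β * γ)) * β + (α / (α * δ - β * γ)) * δ = 1 by
      rw [div_mul_eq_mul_div, div_mul_eq_mul_div, ← add_div, div_eq_one_iff_eq h]; ring]
  simp

lemma reduce (N D G A B : K[X]) (hG : G ≠ 0) (hN : N = G * A) (hD : D = G * B)
    (hAB : IsCoprime A B) :
    ∃ w : K, w ≠ 0 ∧ N / EuclideanDomain.gcd N D = C w * A ∧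
      D / EuclideanDomain.gcd N D = C w * B := by
  obtain ⟨u, v, huv⟩ := hAB
  set g := EuclideanDomain.gcd N D with hg
  have hdvd1 : G ∣ g := EuclideanDomain.dvd_gcd ⟨A, hN⟩ ⟨B, hD⟩
  have hGuv : G = u * N + v * D := by
    rw [hN, hD]
    calc G = G * (u * A + v * B) := by rw [huv, mul_one]
    _ = u * (G * A) + v * (G * B) := by ring
  have hdvd2 : g ∣ G := by
    rw [hGuv]
    exact dvd_add ((EuclideanDomain.gcd_dvd_left N D).mul_left u)
      ((EuclideanDomain.gcd_dvd_right N D).mul_left v)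
  obtain ⟨E, hE⟩ := hdvd1
  obtain ⟨F, hF⟩ := hdvd2
  have hgne : g ≠ 0 := fun h => hG (by rw [hF, h, zero_mul])
  have hEF : E * F = 1 := by
    have h2 : G * (E * F) = G * 1 := by rw [mul_one, ← mul_assoc, ← hE, ← hF]
    exact mul_left_cancel₀ hG h2
  have hEne : E ≠ 0 := left_ne_zero_of_mul_eq_one hEF
  have hFne : F ≠ 0 := right_ne_zero_of_mul_eq_one hEF
  have hdegE : E.natDegree = 0 := by
    have h3 := natDegree_mul hEne hFne
    rw [hEF, natDegree_one] at h3
    omega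
  have hEC : E = C (E.coeff 0) := eq_C_of_natDegree_eq_zero hdegE
  set w0 := E.coeff 0 with hw0
  have hw0ne : w0 ≠ 0 := fun h => hEne (by rw [hEC, h, C_0])
  refine ⟨w0⁻¹, inv_ne_zero hw0ne, ?_, ?_⟩
  · refine (EuclideanDomain.eq_div_of_mul_eq_right hgne ?_).symm
    rw [hE, hEC, hN]
    calc G * C w0 * (C w0⁻¹ * A) = G * A * (C w0 * C w0⁻¹) := by ring
    _ = G * A := by rw [← C_mul, mul_inv_cancel₀ hw0ne, C_1, mul_one]
  · refine (EuclideanDomain.eq_div_of_mul_eq_right hgne ?_).symm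
    rw [hE, hEC, hD]
    calc G * C w0 * (C w0⁻¹ * B) = G * B * (C w0 * C w0⁻¹) := by ring
    _ = G * B := by rw [← C_mul, mul_inv_cancel₀ hw0ne, C_1, mul_one]

lemma bijOn_mobius [Fintype K] (q : ℕ) (σ : K →+* K) (hσ : ∀ x : K, σ x = x ^ q)
    (hqq : ∀ x : K, (x ^ q) ^ q = x)
    (α β γ δ : K) (hdet : α * δ - β * γ ≠ 0)
    (hE1 : α * β ^ q = γ * δ ^ q)
    (hE3 : α ^ (q + 1) + β ^ (q + 1) = γ ^ (q + 1) + δ ^ (q + 1)) :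
    Set.BijOn (fun x => (α * x + β) * (γ * x + δ)⁻¹) (mu q K) (mu q K) := by
  have hE2 : α ^ q * β = γ ^ q * δ := by
    have h := congrArg σ hE1
    rw [map_mul, map_mul, map_pow, map_pow, hσ α, hσ β, hσ γ, hσ δ, hqq β, hqq δ] at h
    exact h
  have key : ∀ x ∈ mu q K, (α * x + β) ^ (q + 1) = (γ * x + δ) ^ (q + 1) := by
    intro x hx
    have hxq : x ^ q * x = 1 := by rw [← pow_succ]; exact hx
    have hfr : ∀ u v : K, (u * x + v) ^ q = u ^ q * x ^ q + v ^ q := by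
      intro u v
      rw [← hσ (u * x + v), map_add, map_mul, hσ, hσ, hσ]
    rw [pow_succ, pow_succ, hfr, hfr]
    linear_combination (α ^ q * α - γ ^ q * γ) * hxq + x ^ q * hE2 + x * hE1 + hE3
  have hden : ∀ x ∈ mu q K, γ * x + δ ≠ 0 := by
    intro x hx h0
    have h1 := key x hx
    rw [h0, zero_pow (Nat.succ_ne_zero q)] at h1
    have h2 : α * x + β = 0 := pow_eq_zero_iff (Nat.succ_ne_zero q) |>.mp h1
    exact hdet (by linear_combination α * h0 - γ * h2)
  have hmaps : Set.MapsTo (fun x => (α * x + β) * (γ * x + δ)⁻¹) (mu q K) (mu q K) := by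
    intro x hx
    show ((α * x + β) * (γ * x + δ)⁻¹) ^ (q + 1) = 1
    rw [mul_pow, key x hx, inv_pow, mul_inv_cancel₀ (pow_ne_zero _ (hden x hx))]
  have hinj : Set.InjOn (fun x => (α * x + β) * (γ * x + δ)⁻¹) (mu q K) := by
    intro x hx y hy h
    have hdx := hden x hx
    have hdy := hden y hy
    simp only [← div_eq_mul_inv] at h
    rw [div_eq_div_iff hdx hdy] at h
    have h4 : (α * δ - β * γ) * (x - y) = 0 := by linear_combination h
    rcases mul_eq_zero.mp h4 with h5 | h5
    · exact absurd h5 hdet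
    · exact sub_eq_zero.mp h5
  exact ((Set.toFinite (mu q K)).injOn_iff_bijOn_of_mapsTo hmaps).mp hinj

lemma deg_and_perm [Fintype K] (q : ℕ) (σ : K →+* K) (hσ : ∀ x : K, σ x = x ^ q)
    (hqq : ∀ x : K, (x ^ q) ^ q = x) (a b c d : K) (G : K[X]) (α β γ δ : K) (hG : G ≠ 0)
    (hN : Npoly q a b c d = G * (C α * X + C β))
    (hD : Dpoly a b c d = G * (C γ * X + C δ))
    (hdet : α * δ - β * γ ≠ 0)
    (hE1 : α * β ^ q = γ * δ ^ q)
    (hE3 : α ^ (q + 1) + β ^ (q + 1) = γ ^ (q + 1) + δ ^ (q + 1)) :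
    gDeg q a b c d = 1 ∧ gPermutes q a b c d := by
  obtain ⟨w, hw, hnum, hden⟩ := reduce _ _ G _ _ hG hN hD (coprime_linear hdet)
  have hnum' : numer₀ q a b c d = C (w * α) * X + C (w * β) := by
    rw [numer₀, hnum, mul_add, ← mul_assoc, ← C_mul, ← C_mul]
  have hden' : denom₀ q a b c d = C (w * γ) * X + C (w * δ) := by
    rw [denom₀, hden, mul_add, ← mul_assoc, ← C_mul, ← C_mul]
  have hαγ : α ≠ 0 ∨ γ ≠ 0 := by
    by_contra h
    push_neg at h
    exact hdet (by rw [h.1, h.2]; ring)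
  constructor
  · rw [gDeg, hnum', hden']
    have l1 : (C (w * α) * X + C (w * β)).natDegree ≤ 1 := natDegree_linear_le
    have l2 : (C (w * γ) * X + C (w * δ)).natDegree ≤ 1 := natDegree_linear_le
    rcases hαγ with hα | hγ
    · have e1 : (C (w * α) * X + C (w * β)).natDegree = 1 :=
        natDegree_linear (mul_ne_zero hw hα)
      omega
    · have e2 : (C (w * γ) * X + C (w * δ)).natDegree = 1 :=
        natDegree_linear (mul_ne_zero hw hγ)
      omega
  · have hfun : (fun x => (numer₀ q a b c d).eval x * ((denom₀ q a b c d).eval x)⁻¹)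
        = fun x => ((w * α) * x + w * β) * ((w * γ) * x + w * δ)⁻¹ := by
      funext x
      rw [hnum', hden']
      simp [eval_add, eval_mul, eval_C, eval_X]
    unfold gPermutes
    rw [hfun]
    refine bijOn_mobius q σ hσ hqq _ _ _ _ ?_ ?_ ?_
    · have h : w * α * (w * δ) - w * β * (w * γ) = w * w * (α * δ - β * γ) := by ring
      rw [h]
      exact mul_ne_zero (mul_ne_zero hw hw) hdet
    · rw [mul_pow, mul_pow]
      linear_combination w * w ^ q * hE1
    · rw [mul_pow, mul_pow, mul_pow, mul_pow]
      linear_combination w ^ (q + 1) * hE3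

lemma forward_dne0 [Fintype K] (q : ℕ) (σ : K →+* K) (hσ : ∀ x : K, σ x = x ^ q)
    (hqq : ∀ x : K, (x ^ q) ^ q = x) (a b c d : K) (hd : d ≠ 0)
    (he1 : d ^ q * b - a * c ^ q ≠ 0) (he3 : d ^ (q + 1) - a ^ (q + 1) ≠ 0)
    (hrel2 : (d * c ^ q - a ^ q * b) * (d ^ q * b - a * c ^ q)
      = (d ^ q * c - a * b ^ q) * (d ^ (q + 1) - a ^ (q + 1)))
    (hrel3 : (d * b ^ q - a ^ q * c) * (d ^ q * b - a * c ^ q)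
      = (d ^ (q + 1) - a ^ (q + 1)) * (d ^ (q + 1) - a ^ (q + 1))) :
    gDeg q a b c d = 1 ∧ gPermutes q a b c d := by
  set e1 := d ^ q * b - a * c ^ q with he1def
  set e2 := d ^ q * c - a * b ^ q with he2def
  set e3 := d ^ (q + 1) - a ^ (q + 1) with he3def
  have hdq : d ^ q ≠ 0 := pow_ne_zero q hd
  have hpq : ∀ x : K, (x ^ q) ^ (q + 1) = x ^ (q + 1) := by
    intro x
    rw [pow_succ, pow_succ, hqq]
    exact mul_comm x (x ^ q)
  have he3q : e3 ^ q = e3 := by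
    have h := hσ e3
    rw [he3def] at h
    rw [map_sub, map_pow, map_pow, hσ d, hσ a, hpq d, hpq a] at h
    rw [← he3def] at h
    exact h.symm
  have hf1q : e1 ^ q = d * b ^ q - a ^ q * c := by
    have hconj : ∀ x : K, σ (x ^ q) = x := fun x => by rw [map_pow, hσ, hqq]
    have h := hσ e1
    rw [he1def] at h
    rw [map_sub, map_mul, map_mul, hconj d, hσ b, hσ a, hconj c] at h
    rw [← he1def] at h
    exact h.symm
  -- the factorization
  have k3 : e1 * (d ^ q * e1⁻¹) = d ^ q := by field_simp
  have k2 : e1 * (a ^ q * e3⁻¹) + e2 * (d ^ q * e1⁻¹) = c ^ q := by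
    have hca : (e1 * (a ^ q * e3⁻¹) + e2 * (d ^ q * e1⁻¹)) * (e1 * e3) = (c ^ q) * (e1 * e3) := by
      have expand : (e1 * (a ^ q * e3⁻¹) + e2 * (d ^ q * e1⁻¹)) * (e1 * e3)
          = a ^ q * (e1 * e1) * (e3⁻¹ * e3) + d ^ q * e2 * e3 * (e1⁻¹ * e1) := by ring
      rw [expand, inv_mul_cancel₀ he3, inv_mul_cancel₀ he1, mul_one, mul_one]
      linear_combination (-(d ^ q)) * hrel2
    exact mul_right_cancel₀ (mul_ne_zero he1 he3) hca
  have k1 : e2 * (a ^ q * e3⁻¹) + e3 * (d ^ q * e1⁻¹) = b ^ q := by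
    have hca : (e2 * (a ^ q * e3⁻¹) + e3 * (d ^ q * e1⁻¹)) * (e1 * e3) = (b ^ q) * (e1 * e3) := by
      have expand : (e2 * (a ^ q * e3⁻¹) + e3 * (d ^ q * e1⁻¹)) * (e1 * e3)
          = a ^ q * e2 * e1 * (e3⁻¹ * e3) + d ^ q * (e3 * e3) * (e1⁻¹ * e1) := by ring
      rw [expand, inv_mul_cancel₀ he3, inv_mul_cancel₀ he1, mul_one, mul_one]
      linear_combination (-(d ^ q)) * hrel3
    exact mul_right_cancel₀ (mul_ne_zero he1 he3) hca
  have k0 : e3 * (a ^ q * e3⁻¹) = a ^ q := by field_simp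
  have m3 : e1 * (a * e1⁻¹) = a := by field_simp
  have m2 : e1 * (d * e3⁻¹) + e2 * (a * e1⁻¹) = b := by
    have hca : (e1 * (d * e3⁻¹) + e2 * (a * e1⁻¹)) * (e1 * e3) = (b) * (e1 * e3) := by
      have expand : (e1 * (d * e3⁻¹) + e2 * (a * e1⁻¹)) * (e1 * e3)
          = d * (e1 * e1) * (e3⁻¹ * e3) + a * e2 * e3 * (e1⁻¹ * e1) := by ring
      rw [expand, inv_mul_cancel₀ he3, inv_mul_cancel₀ he1, mul_one, mul_one]
      linear_combination (-a) * hrel2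
    exact mul_right_cancel₀ (mul_ne_zero he1 he3) hca
  have m1 : e2 * (d * e3⁻¹) + e3 * (a * e1⁻¹) = c := by
    have hca : (e2 * (d * e3⁻¹) + e3 * (a * e1⁻¹)) * (e1 * e3) = (c) * (e1 * e3) := by
      have expand : (e2 * (d * e3⁻¹) + e3 * (a * e1⁻¹)) * (e1 * e3)
          = d * e2 * e1 * (e3⁻¹ * e3) + a * (e3 * e3) * (e1⁻¹ * e1) := by ring
      rw [expand, inv_mul_cancel₀ he3, inv_mul_cancel₀ he1, mul_one, mul_one]
      linear_combination (-a) * hrel3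
    exact mul_right_cancel₀ (mul_ne_zero he1 he3) hca
  have m0 : e3 * (d * e3⁻¹) = d := by field_simp
  have hN : Npoly q a b c d
      = (C e1 * X ^ 2 + C e2 * X + C e3) * (C (d ^ q * e1⁻¹) * X + C (a ^ q * e3⁻¹)) := by
    rw [Npoly, quad_mul_lin, k3, k2, k1, k0]
  have hD : Dpoly a b c d
      = (C e1 * X ^ 2 + C e2 * X + C e3) * (C (a * e1⁻¹) * X + C (d * e3⁻¹)) := by
    rw [Dpoly, quad_mul_lin, m3, m2, m1, m0]
  have hdet : (d ^ q * e1⁻¹) * (d * e3⁻¹) - (a ^ q * e3⁻¹) * (a * e1⁻¹) ≠ 0 := by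
    have h : (d ^ q * e1⁻¹) * (d * e3⁻¹) - (a ^ q * e3⁻¹) * (a * e1⁻¹) = e1⁻¹ := by
      field_simp
      ring
    rw [h]
    exact inv_ne_zero he1
  have he1q1 : e1 ^ (q + 1) = e3 * e3 := by
    rw [pow_succ, hf1q]
    linear_combination hrel3
  have he3q1 : e3 ^ (q + 1) = e3 * e3 := by rw [pow_succ, he3q]
  have hE1 : (d ^ q * e1⁻¹) * (a ^ q * e3⁻¹) ^ q = (a * e1⁻¹) * (d * e3⁻¹) ^ q := by
    have h1 : (a ^ q * e3⁻¹) ^ q = a * e3⁻¹ := by rw [mul_pow, hqq a, inv_pow, he3q]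
    have h2 : (d * e3⁻¹) ^ q = d ^ q * e3⁻¹ := by rw [mul_pow, inv_pow, he3q]
    rw [h1, h2]
    ring
  have hE3 : (d ^ q * e1⁻¹) ^ (q + 1) + (a ^ q * e3⁻¹) ^ (q + 1)
      = (a * e1⁻¹) ^ (q + 1) + (d * e3⁻¹) ^ (q + 1) := by
    have h1 : (d ^ q * e1⁻¹) ^ (q + 1) = d ^ (q + 1) * (e3 * e3)⁻¹ := by
      rw [mul_pow, hpq d, inv_pow, he1q1]
    have h2 : (a ^ q * e3⁻¹) ^ (q + 1) = a ^ (q + 1) * (e3 * e3)⁻¹ := by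
      rw [mul_pow, hpq a, inv_pow, he3q1]
    have h3 : (a * e1⁻¹) ^ (q + 1) = a ^ (q + 1) * (e3 * e3)⁻¹ := by
      rw [mul_pow, inv_pow, he1q1]
    have h4 : (d * e3⁻¹) ^ (q + 1) = d ^ (q + 1) * (e3 * e3)⁻¹ := by
      rw [mul_pow, inv_pow, he3q1]
    rw [h1, h2, h3, h4]
    ring
  exact deg_and_perm q σ hσ hqq a b c d _ _ _ _ _ (quad_ne_zero he1) hN hD hdet hE1 hE3

lemma structure_facts (q : ℕ) (a b c d : K) (hN : Npoly q a b c d ≠ 0)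
    (hD : Dpoly a b c d ≠ 0) :
    EuclideanDomain.gcd (Npoly q a b c d) (Dpoly a b c d) ≠ 0 ∧
    Npoly q a b c d = EuclideanDomain.gcd (Npoly q a b c d) (Dpoly a b c d) * numer₀ q a b c d ∧
    Dpoly a b c d = EuclideanDomain.gcd (Npoly q a b c d) (Dpoly a b c d) * denom₀ q a b c d ∧
    numer₀ q a b c d ≠ 0 ∧ denom₀ q a b c d ≠ 0 ∧
    (Npoly q a b c d).natDegree
      = (EuclideanDomain.gcd (Npoly q a b c d) (Dpoly a b c d)).natDegree
        + (numer₀ q a b c d).natDegree ∧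
    (Dpoly a b c d).natDegree
      = (EuclideanDomain.gcd (Npoly q a b c d) (Dpoly a b c d)).natDegree
        + (denom₀ q a b c d).natDegree := by
  have hg : EuclideanDomain.gcd (Npoly q a b c d) (Dpoly a b c d) ≠ 0 :=
    fun h => hN ((EuclideanDomain.gcd_eq_zero_iff.mp h).1)
  have h1 : Npoly q a b c d
      = EuclideanDomain.gcd (Npoly q a b c d) (Dpoly a b c d) * numer₀ q a b c d :=
    (EuclideanDomain.mul_div_cancel' hg (EuclideanDomain.gcd_dvd_left _ _)).symm
  have h2 : Dpoly a b c d
      = EuclideanDomain.gcd (Npoly q a b c d) (Dpoly a b c d) * denom₀ q a b c d :=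
    (EuclideanDomain.mul_div_cancel' hg (EuclideanDomain.gcd_dvd_right _ _)).symm
  have h3 : numer₀ q a b c d ≠ 0 := by
    intro h
    rw [h, mul_zero] at h1
    exact hN h1
  have h4 : denom₀ q a b c d ≠ 0 := by
    intro h
    rw [h, mul_zero] at h2
    exact hD h2
  refine ⟨hg, h1, h2, h3, h4, ?_, ?_⟩
  · conv_lhs => rw [h1]
    exact natDegree_mul hg h3
  · conv_lhs => rw [h2]
    exact natDegree_mul hg h4


end Stmt0Proof

/-- Theorem 1 of the paper: `g` has degree 1 and permutes `μ_{q+1}`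
iff one of the four listed coefficient conditions holds. -/
theorem stmt0 {K : Type*} [Field K] [Fintype K] (p m q : ℕ) (hp : p.Prime)
    (hm : 1 ≤ m) (hq : q = p ^ m) (hK : Fintype.card K = q ^ 2) (a b c d : K) :
    (gDeg q a b c d = 1 ∧ gPermutes q a b c d) ↔
      ((d = 0 ∧ c ≠ 0 ∧ b * c ^ q = a * b ^ q ∧ c ^ (q + 1) = a ^ (q + 1)) ∨
       (d = 0 ∧ a = 0 ∧ c ^ (q + 1) ≠ b ^ (q + 1)) ∨
       (d ≠ 0 ∧ d ^ q * b ≠ a * c ^ q ∧ d ^ q * c ≠ a * b ^ q ∧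
         ((d ^ q * c - a * b ^ q) / (d ^ q * b - a * c ^ q)) ^ q *
           ((d ^ (q + 1) - a ^ (q + 1)) / (d ^ q * b - a * c ^ q)) =
           (d ^ q * c - a * b ^ q) / (d ^ q * b - a * c ^ q)) ∨
       (d ≠ 0 ∧ d ^ q * b ≠ a * c ^ q ∧ d ^ q * c = a * b ^ q ∧
         (d ^ (q + 1) - a ^ (q + 1)) / (d ^ q * b - a * c ^ q) = b ^ q / d ^ q ∧
         b ^ q / d ^ q ∈ mu q K)) := by
  have hqpos : 0 < q := hq ▸ pow_pos hp.pos m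
  have hq0 : q ≠ 0 := hqpos.ne'
  haveI : Fact p.Prime := ⟨hp⟩
  have hrp : (ringChar K).Prime := CharP.char_is_prime K (ringChar K)
  obtain ⟨n, -, hcard⟩ := FiniteField.card K (ringChar K)
  have hpr : p = ringChar K := by
    have h1 : p ∣ ringChar K ^ (n : ℕ) := by
      rw [← hcard, hK, hq, ← pow_mul]
      exact dvd_pow_self p (by omega)
    exact (Nat.prime_dvd_prime_iff_eq hp hrp).mp (hp.dvd_of_dvd_pow h1)
  haveI hcharP : CharP K p := by rw [hpr]; exact ringChar.charP K
  set σ := iterateFrobenius K p m with hσdef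
  have hσ : ∀ x : K, σ x = x ^ q := fun x => by
    rw [hσdef, iterateFrobenius_def, hq]
  have hqq : ∀ x : K, (x ^ q) ^ q = x := by
    intro x
    rw [← pow_mul]
    have hm2 : q * q = Fintype.card K := by rw [hK]; ring
    rw [hm2]
    exact FiniteField.pow_card x
  have hconj : ∀ x : K, σ (x ^ q) = x := fun x => by rw [map_pow, hσ, hqq]
  have hpq : ∀ x : K, (x ^ q) ^ (q + 1) = x ^ (q + 1) := by
    intro x
    rw [pow_succ, pow_succ, hqq]
    exact mul_comm x (x ^ q)
  have hf1q : (d ^ q * b - a * c ^ q) ^ q = d * b ^ q - a ^ q * c := by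
    have h := hσ (d ^ q * b - a * c ^ q)
    rw [map_sub, map_mul, map_mul, hconj d, hσ b, hσ a, hconj c] at h
    exact h.symm
  have hf2q : (d ^ q * c - a * b ^ q) ^ q = d * c ^ q - a ^ q * b := by
    have h := hσ (d ^ q * c - a * b ^ q)
    rw [map_sub, map_mul, map_mul, hconj d, hσ c, hσ a, hconj b] at h
    exact h.symm
  have hf1qq : (d * b ^ q - a ^ q * c) ^ q = d ^ q * b - a * c ^ q := by
    have h := hσ (d * b ^ q - a ^ q * c)
    rw [map_sub, map_mul, map_mul, hσ d, hconj b, hconj a, hσ c] at h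
    exact h.symm
  have hf2qq : (d * c ^ q - a ^ q * b) ^ q = d ^ q * c - a * b ^ q := by
    have h := hσ (d * c ^ q - a ^ q * b)
    rw [map_sub, map_mul, map_mul, hσ d, hconj c, hconj a, hσ b] at h
    exact h.symm
  have he3q : (d ^ (q + 1) - a ^ (q + 1)) ^ q = d ^ (q + 1) - a ^ (q + 1) := by
    have h := hσ (d ^ (q + 1) - a ^ (q + 1))
    rw [map_sub, map_pow, map_pow, hσ d, hσ a, hpq d, hpq a] at h
    exact h.symm
  constructor
  · rintro ⟨hdeg, -⟩
    rw [gDeg] at hdeg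
    have hn1 : (numer₀ q a b c d).natDegree ≤ 1 := le_trans (le_max_left _ _) hdeg.le
    have hd1 : (denom₀ q a b c d).natDegree ≤ 1 := le_trans (le_max_right _ _) hdeg.le
    by_cases hd : d = 0
    · subst hd
      by_cases ha : a = 0
      · subst ha
        refine Or.inr (Or.inl ⟨rfl, rfl, ?_⟩)
        intro hne
        by_cases hb : b = 0
        · have hc : c = 0 := by
            have h3 : c ^ (q + 1) = 0 := by rw [hne, hb, zero_pow (Nat.succ_ne_zero q)]
            exact pow_eq_zero_iff (Nat.succ_ne_zero q) |>.mp h3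
          have hN0 : Npoly q 0 b c 0 = 0 := by
            rw [hb, hc, Npoly, zero_pow hq0, C_0]
            ring
          have hD0 : Dpoly 0 b c 0 = 0 := by
            rw [hb, hc, Dpoly, C_0]
            ring
          rw [numer₀, denom₀, hN0, hD0, EuclideanDomain.zero_div, natDegree_zero] at hdeg
          simp at hdeg
        · have hc : c ≠ 0 := by
            intro h0
            apply hb
            have h3 : b ^ (q + 1) = 0 := by rw [← hne, h0, zero_pow (Nat.succ_ne_zero q)]
            exact pow_eq_zero_iff (Nat.succ_ne_zero q) |>.mp h3
          have hDne' : Dpoly 0 b c 0 ≠ 0 := by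
            intro h0
            rw [Dpoly] at h0
            exact hb (Stmt0Proof.cubic_eq_zero h0).2.1
          have h1 : C b * C (c ^ q * b⁻¹) = C (c ^ q) := by
            rw [← C_mul]
            congr 1
            field_simp
          have h2 : C c * C (c ^ q * b⁻¹) = C (b ^ q) := by
            rw [← C_mul]
            congr 1
            field_simp
            linear_combination hne
          have hNfac' : Npoly q 0 b c 0 = Dpoly 0 b c 0 * C (c ^ q * b⁻¹) := by
            rw [Npoly, Dpoly, zero_pow hq0, C_0]
            linear_combination (-(X ^ 2 : K[X])) * h1 - (X : K[X]) * h2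
          obtain ⟨w, hw, hnum, hden⟩ := Stmt0Proof.reduce (Npoly q 0 b c 0) (Dpoly 0 b c 0)
            (Dpoly 0 b c 0) (C (c ^ q * b⁻¹)) 1 hDne' hNfac' (mul_one _).symm isCoprime_one_right
          rw [numer₀, denom₀, hnum, hden, ← C_mul, mul_one, natDegree_C, natDegree_C] at hdeg
          simp at hdeg
      · -- d = 0, a ≠ 0 : case (1)
        have hNq : Npoly q a b c 0 = C (c ^ q) * X ^ 2 + C (b ^ q) * X + C (a ^ q) := by
          rw [Npoly, zero_pow hq0, C_0]
          ring
        have hDdeg : (Dpoly a b c 0).natDegree = 3 := by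
          rw [Dpoly]; exact natDegree_cubic ha
        have hDne : Dpoly a b c 0 ≠ 0 := by
          intro h
          rw [h, natDegree_zero] at hDdeg
          exact absurd hDdeg (by norm_num)
        have hNne : Npoly q a b c 0 ≠ 0 := by
          intro h0
          rw [numer₀, denom₀, h0, EuclideanDomain.gcd_zero_left, EuclideanDomain.zero_div,
            EuclideanDomain.div_self hDne, natDegree_zero, natDegree_one] at hdeg
          simp at hdeg
        obtain ⟨hg, hNfac, hDfac, hN0ne, hD0ne, hNsum, hDsum⟩ :=
          Stmt0Proof.structure_facts q a b c 0 hNne hDne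
        have hNdegle : (Npoly q a b c 0).natDegree ≤ 2 := by
          rw [hNq]; exact natDegree_quadratic_le
        have hGdeg : (EuclideanDomain.gcd (Npoly q a b c 0) (Dpoly a b c 0)).natDegree = 2 := by
          omega
        have hn0z : (numer₀ q a b c 0).natDegree = 0 := by omega
        have hNdeg2 : (Npoly q a b c 0).natDegree = 2 := by omega
        have hc : c ≠ 0 := by
          intro h0
          have h5 : (Npoly q a b c 0).natDegree ≤ 1 := by
            rw [hNq, h0, zero_pow hq0, C_0, zero_mul, zero_add]
            exact natDegree_linear_le
          omega
        obtain ⟨k, hk⟩ : ∃ k, numer₀ q a b c 0 = C k :=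
          ⟨_, eq_C_of_natDegree_eq_zero hn0z⟩
        have hkne : k ≠ 0 := by
          intro h
          exact hN0ne (by rw [hk, h, C_0])
        have hDNp : Dpoly a b c 0 = Npoly q a b c 0 * (C k⁻¹ * denom₀ q a b c 0) := by
          calc Dpoly a b c 0
              = EuclideanDomain.gcd (Npoly q a b c 0) (Dpoly a b c 0) * denom₀ q a b c 0 := hDfac
          _ = EuclideanDomain.gcd (Npoly q a b c 0) (Dpoly a b c 0) * denom₀ q a b c 0
                * (C k * C k⁻¹) := by
                rw [← C_mul, mul_inv_cancel₀ hkne, C_1, mul_one]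
          _ = EuclideanDomain.gcd (Npoly q a b c 0) (Dpoly a b c 0) * C k
                * (C k⁻¹ * denom₀ q a b c 0) := by ring
          _ = EuclideanDomain.gcd (Npoly q a b c 0) (Dpoly a b c 0) * numer₀ q a b c 0
                * (C k⁻¹ * denom₀ q a b c 0) := by rw [← hk]
          _ = Npoly q a b c 0 * (C k⁻¹ * denom₀ q a b c 0) := by rw [← hNfac]
        have hLdeg : (C k⁻¹ * denom₀ q a b c 0).natDegree ≤ 1 := by
          rw [natDegree_C_mul (inv_ne_zero hkne)]
          omega
        obtain ⟨s', t', hL⟩ := exists_eq_X_add_C_of_natDegree_le_one hLdeg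
        have hcubic : C a * X ^ 3 + C b * X ^ 2 + C c * X + C 0
            = C (c ^ q * s') * X ^ 3 + C (c ^ q * t' + b ^ q * s') * X ^ 2
              + C (b ^ q * t' + a ^ q * s') * X + C (a ^ q * t') := by
          calc C a * X ^ 3 + C b * X ^ 2 + C c * X + C 0 = Dpoly a b c 0 := by rw [Dpoly]
          _ = Npoly q a b c 0 * (C k⁻¹ * denom₀ q a b c 0) := hDNp
          _ = (C (c ^ q) * X ^ 2 + C (b ^ q) * X + C (a ^ q)) * (C s' * X + C t') := by
              rw [hNq, hL]
          _ = _ := Stmt0Proof.quad_mul_lin _ _ _ _ _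
        obtain ⟨g3, g2, g1, g0⟩ := Stmt0Proof.cubic_ext hcubic
        have ht : t' = 0 := by
          rcases mul_eq_zero.mp g0.symm with h | h
          · exact absurd h (pow_ne_zero q ha)
          · exact h
        rw [ht, mul_zero, zero_add] at g2 g1
        refine Or.inl ⟨rfl, hc, ?_, ?_⟩
        · linear_combination c ^ q * g2 - b ^ q * g3
        · linear_combination c ^ q * g1 - a ^ q * g3
    · -- d ≠ 0
      have hdq : d ^ q ≠ 0 := pow_ne_zero q hd
      have hNdeg : (Npoly q a b c d).natDegree = 3 := by
        rw [Npoly]; exact natDegree_cubic hdq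
      have hNne : Npoly q a b c d ≠ 0 := by
        intro h
        rw [h, natDegree_zero] at hNdeg
        exact absurd hNdeg (by norm_num)
      have hDne : Dpoly a b c d ≠ 0 := by
        intro h0
        rw [Dpoly] at h0
        exact hd (Stmt0Proof.cubic_eq_zero h0).2.2.2
      obtain ⟨hg, hNfac, hDfac, hN0ne, hD0ne, hNsum, hDsum⟩ :=
        Stmt0Proof.structure_facts q a b c d hNne hDne
      have hDle : (Dpoly a b c d).natDegree ≤ 3 := by
        rw [Dpoly]; exact natDegree_cubic_le
      have hone : (numer₀ q a b c d).natDegree = 1 ∨ (denom₀ q a b c d).natDegree = 1 := by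
        rcases max_choice (numer₀ q a b c d).natDegree (denom₀ q a b c d).natDegree with h | h
        · left; omega
        · right; omega
      have hGdeg : (EuclideanDomain.gcd (Npoly q a b c d) (Dpoly a b c d)).natDegree = 2 := by
        rcases hone with h | h <;> omega
      have hn01 : (numer₀ q a b c d).natDegree = 1 := by omega
      have hRid : C (d ^ q) * Dpoly a b c d - C a * Npoly q a b c d
          = C (d ^ q * b - a * c ^ q) * X ^ 2 + C (d ^ q * c - a * b ^ q) * X
            + C (d ^ (q + 1) - a ^ (q + 1)) := by
        rw [Npoly, Dpoly]
        simp only [map_sub, map_mul, map_pow]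
        ring
      have hGdvdR : EuclideanDomain.gcd (Npoly q a b c d) (Dpoly a b c d)
          ∣ (C (d ^ q * b - a * c ^ q) * X ^ 2 + C (d ^ q * c - a * b ^ q) * X
            + C (d ^ (q + 1) - a ^ (q + 1))) := by
        rw [← hRid]
        exact dvd_sub ((EuclideanDomain.gcd_dvd_right _ _).mul_left _)
          ((EuclideanDomain.gcd_dvd_left _ _).mul_left _)
      have hprop : ∀ k : K, Npoly q a b c d ≠ Dpoly a b c d * C k := by
        intro k hcontra
        have hdvd : Dpoly a b c d ∣ EuclideanDomain.gcd (Npoly q a b c d) (Dpoly a b c d) :=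
          EuclideanDomain.dvd_gcd ⟨C k, hcontra⟩ dvd_rfl
        have h3 : (Dpoly a b c d).natDegree ≤ 2 := hGdeg ▸ natDegree_le_of_dvd hdvd hg
        have hkC : (C k : K[X]) ≠ 0 := by
          intro h
          rw [h, mul_zero] at hcontra
          exact hNne hcontra
        have h4 : (Npoly q a b c d).natDegree = (Dpoly a b c d).natDegree := by
          rw [hcontra, natDegree_mul hDne hkC, natDegree_C, add_zero]
        omega
      have hRne : (C (d ^ q * b - a * c ^ q) * X ^ 2 + C (d ^ q * c - a * b ^ q) * X
          + C (d ^ (q + 1) - a ^ (q + 1))) ≠ 0 := by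
        intro h0
        have h0' : C (0 : K) * X ^ 3 + C (d ^ q * b - a * c ^ q) * X ^ 2
            + C (d ^ q * c - a * b ^ q) * X + C (d ^ (q + 1) - a ^ (q + 1)) = 0 := by
          rw [C_0, zero_mul, zero_add, h0]
        obtain ⟨-, hz1, hz2, hz3⟩ := Stmt0Proof.cubic_eq_zero h0'
        have ha : a ≠ 0 := by
          intro ha0
          apply hd
          have h5 : d ^ (q + 1) = 0 := by
            have := sub_eq_zero.mp hz3
            rw [this, ha0, zero_pow (Nat.succ_ne_zero q)]
          exact pow_eq_zero_iff (Nat.succ_ne_zero q) |>.mp h5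
        have h6 : C a * Npoly q a b c d = C (d ^ q) * Dpoly a b c d := by
          have h5 : C (d ^ q) * Dpoly a b c d - C a * Npoly q a b c d = 0 := by
            rw [hRid, hz1, hz2, hz3, C_0]
            ring
          linear_combination -h5
        have hcontra : Npoly q a b c d = Dpoly a b c d * C (a⁻¹ * d ^ q) := by
          calc Npoly q a b c d = C a⁻¹ * (C a * Npoly q a b c d) := by
                rw [← mul_assoc, ← C_mul, inv_mul_cancel₀ ha, C_1, one_mul]
          _ = C a⁻¹ * (C (d ^ q) * Dpoly a b c d) := by rw [h6]
          _ = Dpoly a b c d * C (a⁻¹ * d ^ q) := by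
                rw [← mul_assoc, ← C_mul]
                ring
        exact hprop _ hcontra
      have he1 : d ^ q * b - a * c ^ q ≠ 0 := by
        intro h0
        have hle := natDegree_le_of_dvd hGdvdR hRne
        rw [h0, C_0, zero_mul, zero_add] at hle
        have hle2 : (C (d ^ q * c - a * b ^ q) * X
            + C (d ^ (q + 1) - a ^ (q + 1))).natDegree ≤ 1 := natDegree_linear_le
        omega
      have hRdeg : (C (d ^ q * b - a * c ^ q) * X ^ 2 + C (d ^ q * c - a * b ^ q) * X
          + C (d ^ (q + 1) - a ^ (q + 1))).natDegree = 2 := natDegree_quadratic he1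
      obtain ⟨E, hE⟩ := hGdvdR
      have hEne : E ≠ 0 := by
        intro h
        rw [h, mul_zero] at hE
        exact hRne hE
      have hEdeg : E.natDegree = 0 := by
        have h5 := natDegree_mul hg hEne
        rw [← hE] at h5
        omega
      obtain ⟨c₀, hEC⟩ : ∃ c₀, E = C c₀ := ⟨_, eq_C_of_natDegree_eq_zero hEdeg⟩
      have hc0ne : c₀ ≠ 0 := by
        intro h
        exact hEne (by rw [hEC, h, C_0])
      have hNRA : Npoly q a b c d
          = (C (d ^ q * b - a * c ^ q) * X ^ 2 + C (d ^ q * c - a * b ^ q) * X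
            + C (d ^ (q + 1) - a ^ (q + 1))) * (C c₀⁻¹ * numer₀ q a b c d) := by
        rw [hE, hEC]
        calc Npoly q a b c d
            = EuclideanDomain.gcd (Npoly q a b c d) (Dpoly a b c d) * numer₀ q a b c d := hNfac
        _ = EuclideanDomain.gcd (Npoly q a b c d) (Dpoly a b c d) * numer₀ q a b c d
              * (C c₀ * C c₀⁻¹) := by rw [← C_mul, mul_inv_cancel₀ hc0ne, C_1, mul_one]
        _ = EuclideanDomain.gcd (Npoly q a b c d) (Dpoly a b c d) * C c₀
              * (C c₀⁻¹ * numer₀ q a b c d) := by ring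
      have hDRB : Dpoly a b c d
          = (C (d ^ q * b - a * c ^ q) * X ^ 2 + C (d ^ q * c - a * b ^ q) * X
            + C (d ^ (q + 1) - a ^ (q + 1))) * (C c₀⁻¹ * denom₀ q a b c d) := by
        rw [hE, hEC]
        calc Dpoly a b c d
            = EuclideanDomain.gcd (Npoly q a b c d) (Dpoly a b c d) * denom₀ q a b c d := hDfac
        _ = EuclideanDomain.gcd (Npoly q a b c d) (Dpoly a b c d) * denom₀ q a b c d
              * (C c₀ * C c₀⁻¹) := by rw [← C_mul, mul_inv_cancel₀ hc0ne, C_1, mul_one]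
        _ = EuclideanDomain.gcd (Npoly q a b c d) (Dpoly a b c d) * C c₀
              * (C c₀⁻¹ * denom₀ q a b c d) := by ring
      have hAdeg : (C c₀⁻¹ * numer₀ q a b c d).natDegree ≤ 1 := by
        rw [natDegree_C_mul (inv_ne_zero hc0ne)]
        omega
      have hBdeg : (C c₀⁻¹ * denom₀ q a b c d).natDegree ≤ 1 := by
        rw [natDegree_C_mul (inv_ne_zero hc0ne)]
        omega
      obtain ⟨u, v, hAX⟩ := exists_eq_X_add_C_of_natDegree_le_one hAdeg
      obtain ⟨s', t', hBX⟩ := exists_eq_X_add_C_of_natDegree_le_one hBdeg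
      have hNcubic : C (d ^ q) * X ^ 3 + C (c ^ q) * X ^ 2 + C (b ^ q) * X + C (a ^ q)
          = C ((d ^ q * b - a * c ^ q) * u) * X ^ 3
            + C ((d ^ q * b - a * c ^ q) * v + (d ^ q * c - a * b ^ q) * u) * X ^ 2
            + C ((d ^ q * c - a * b ^ q) * v + (d ^ (q + 1) - a ^ (q + 1)) * u) * X
            + C ((d ^ (q + 1) - a ^ (q + 1)) * v) := by
        calc C (d ^ q) * X ^ 3 + C (c ^ q) * X ^ 2 + C (b ^ q) * X + C (a ^ q)
            = Npoly q a b c d := by rw [Npoly]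
        _ = (C (d ^ q * b - a * c ^ q) * X ^ 2 + C (d ^ q * c - a * b ^ q) * X
              + C (d ^ (q + 1) - a ^ (q + 1))) * (C c₀⁻¹ * numer₀ q a b c d) := hNRA
        _ = (C (d ^ q * b - a * c ^ q) * X ^ 2 + C (d ^ q * c - a * b ^ q) * X
              + C (d ^ (q + 1) - a ^ (q + 1))) * (C u * X + C v) := by rw [hAX]
        _ = _ := Stmt0Proof.quad_mul_lin _ _ _ _ _
      obtain ⟨k3, k2, k1, k0⟩ := Stmt0Proof.cubic_ext hNcubic
      have hDcubic : C a * X ^ 3 + C b * X ^ 2 + C c * X + C d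
          = C ((d ^ q * b - a * c ^ q) * s') * X ^ 3
            + C ((d ^ q * b - a * c ^ q) * t' + (d ^ q * c - a * b ^ q) * s') * X ^ 2
            + C ((d ^ q * c - a * b ^ q) * t' + (d ^ (q + 1) - a ^ (q + 1)) * s') * X
            + C ((d ^ (q + 1) - a ^ (q + 1)) * t') := by
        calc C a * X ^ 3 + C b * X ^ 2 + C c * X + C d
            = Dpoly a b c d := by rw [Dpoly]
        _ = (C (d ^ q * b - a * c ^ q) * X ^ 2 + C (d ^ q * c - a * b ^ q) * X
              + C (d ^ (q + 1) - a ^ (q + 1))) * (C c₀⁻¹ * denom₀ q a b c d) := hDRB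
        _ = (C (d ^ q * b - a * c ^ q) * X ^ 2 + C (d ^ q * c - a * b ^ q) * X
              + C (d ^ (q + 1) - a ^ (q + 1))) * (C s' * X + C t') := by rw [hBX]
        _ = _ := Stmt0Proof.quad_mul_lin _ _ _ _ _
      obtain ⟨n3, n2, n1, n0⟩ := Stmt0Proof.cubic_ext hDcubic
      have he3 : d ^ (q + 1) - a ^ (q + 1) ≠ 0 := by
        intro h0
        rw [h0, zero_mul] at n0
        exact hd n0
      have step1 : (d ^ q * b - a * c ^ q) * (d * u - a ^ q * s') = d ^ (q + 1) - a ^ (q + 1) := by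
        linear_combination a ^ q * n3 - d * k3
      have step2 : (d ^ (q + 1) - a ^ (q + 1)) * (d * v - a ^ q * t') = 0 := by
        linear_combination a ^ q * n0 - d * k0
      have hsub2 : d * c ^ q - a ^ q * b
          = (d ^ q * b - a * c ^ q) * (d * v - a ^ q * t')
            + (d ^ q * c - a * b ^ q) * (d * u - a ^ q * s') := by
        linear_combination d * k2 - a ^ q * n2
      have hsub1 : d * b ^ q - a ^ q * c
          = (d ^ (q + 1) - a ^ (q + 1)) * (d * u - a ^ q * s')
            + (d ^ q * c - a * b ^ q) * (d * v - a ^ q * t') := by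
        linear_combination d * k1 - a ^ q * n1
      have stepf2 : ((d * c ^ q - a ^ q * b) * (d ^ q * b - a * c ^ q))
            * (d ^ (q + 1) - a ^ (q + 1))
          = ((d ^ q * c - a * b ^ q) * (d ^ (q + 1) - a ^ (q + 1)))
            * (d ^ (q + 1) - a ^ (q + 1)) := by
        linear_combination ((d ^ q * b - a * c ^ q) * (d ^ (q + 1) - a ^ (q + 1))) * hsub2
          + ((d ^ q * b - a * c ^ q) * (d ^ q * b - a * c ^ q)) * step2
          + ((d ^ q * c - a * b ^ q) * (d ^ (q + 1) - a ^ (q + 1))) * step1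
      have stepf1 : ((d * b ^ q - a ^ q * c) * (d ^ q * b - a * c ^ q))
            * (d ^ (q + 1) - a ^ (q + 1))
          = ((d ^ (q + 1) - a ^ (q + 1)) * (d ^ (q + 1) - a ^ (q + 1)))
            * (d ^ (q + 1) - a ^ (q + 1)) := by
        linear_combination ((d ^ q * b - a * c ^ q) * (d ^ (q + 1) - a ^ (q + 1))) * hsub1
          + ((d ^ (q + 1) - a ^ (q + 1)) * (d ^ (q + 1) - a ^ (q + 1))) * step1
          + ((d ^ q * c - a * b ^ q) * (d ^ q * b - a * c ^ q)) * step2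
      have hf1e1 : (d * b ^ q - a ^ q * c) * (d ^ q * b - a * c ^ q)
          = (d ^ (q + 1) - a ^ (q + 1)) * (d ^ (q + 1) - a ^ (q + 1)) :=
        mul_right_cancel₀ he3 stepf1
      have hf2e1 : (d * c ^ q - a ^ q * b) * (d ^ q * b - a * c ^ q)
          = (d ^ q * c - a * b ^ q) * (d ^ (q + 1) - a ^ (q + 1)) :=
        mul_right_cancel₀ he3 stepf2
      by_cases he2 : d ^ q * c = a * b ^ q
      · -- case (4)
        have he2z : d ^ q * c - a * b ^ q = 0 := sub_eq_zero_of_eq he2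
        have hcross : (d ^ (q + 1) - a ^ (q + 1)) * d ^ q
            = b ^ q * (d ^ q * b - a * c ^ q) := by
          linear_combination (d ^ (q + 1) - a ^ (q + 1)) * k3
            - (d ^ q * b - a * c ^ q) * k1 - ((d ^ q * b - a * c ^ q) * v) * he2z
        refine Or.inr (Or.inr (Or.inr ⟨hd, sub_ne_zero.mp he1, he2, ?_, ?_⟩))
        · rw [div_eq_div_iff he1 hdq]
          linear_combination hcross
        · show (b ^ q / d ^ q) ^ (q + 1) = 1
          have hbqd : b ^ q / d ^ q = (d ^ (q + 1) - a ^ (q + 1)) / (d ^ q * b - a * c ^ q) := by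
            rw [div_eq_div_iff hdq he1]
            linear_combination -hcross
          rw [hbqd, div_pow]
          have hh1 : (d ^ (q + 1) - a ^ (q + 1)) ^ (q + 1)
              = (d ^ (q + 1) - a ^ (q + 1)) * (d ^ (q + 1) - a ^ (q + 1)) := by
            rw [pow_succ, he3q]
          have hh2 : (d ^ q * b - a * c ^ q) ^ (q + 1)
              = (d ^ (q + 1) - a ^ (q + 1)) * (d ^ (q + 1) - a ^ (q + 1)) := by
            rw [pow_succ, hf1q]
            linear_combination hf1e1
          rw [hh1, hh2]
          exact div_self (mul_ne_zero he3 he3)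
      · -- case (3)
        refine Or.inr (Or.inr (Or.inl ⟨hd, sub_ne_zero.mp he1, he2, ?_⟩))
        have hf1ne : d * b ^ q - a ^ q * c ≠ 0 := by
          rw [← hf1q]
          exact pow_ne_zero q he1
        rw [div_pow, hf2q, hf1q, div_mul_div_comm,
          div_eq_div_iff (mul_ne_zero hf1ne he1) he1]
        linear_combination (d ^ (q + 1) - a ^ (q + 1)) * hf2e1
          - (d ^ q * c - a * b ^ q) * hf1e1
  · rintro (⟨hd, hc, hbc, hca⟩ | ⟨hd, ha, hne⟩ | ⟨hd, h1, h2, heq⟩ | ⟨hd, h1, h2, heq, hmu⟩)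
    · -- case (1)
      subst hd
      have hcq : c ^ q ≠ 0 := pow_ne_zero q hc
      have ha : a ≠ 0 := by
        intro h0
        apply hc
        have h3 : c ^ (q + 1) = 0 := by rw [hca, h0, zero_pow (Nat.succ_ne_zero q)]
        exact pow_eq_zero_iff (Nat.succ_ne_zero q) |>.mp h3
      have hacq : a ^ (q + 1) ≠ 0 := pow_ne_zero _ ha
      refine Stmt0Proof.deg_and_perm q σ hσ hqq a b c 0
        (C (c ^ q) * X ^ 2 + C (b ^ q) * X + C (a ^ q)) 0 1 (a * (c ^ q)⁻¹) 0
        (Stmt0Proof.quad_ne_zero hcq) ?_ ?_ ?_ ?_ ?_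
      · rw [Npoly, zero_pow hq0, C_0, C_1]
        ring
      · rw [Dpoly, Stmt0Proof.quad_mul_lin,
          show c ^ q * (a * (c ^ q)⁻¹) = a from by field_simp,
          show c ^ q * 0 + b ^ q * (a * (c ^ q)⁻¹) = b from by
            field_simp
            linear_combination -hbc,
          show b ^ q * 0 + a ^ q * (a * (c ^ q)⁻¹) = c from by
            field_simp
            linear_combination -hca,
          show a ^ q * (0 : K) = 0 from mul_zero _]
      · simp only [zero_mul, one_mul, zero_sub, neg_ne_zero]
        exact mul_ne_zero ha (inv_ne_zero hcq)
      · rw [zero_pow hq0, mul_zero, zero_mul]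
      · rw [zero_pow (Nat.succ_ne_zero q), one_pow, zero_add, add_zero, mul_pow, inv_pow,
          hpq c, ← hca]
        exact (mul_inv_cancel₀ (fun h => hc (pow_eq_zero_iff (Nat.succ_ne_zero q) |>.mp h))).symm
    · -- case (2)
      subst hd; subst ha
      refine Stmt0Proof.deg_and_perm q σ hσ hqq 0 b c 0 X (c ^ q) (b ^ q) b c X_ne_zero
        ?_ ?_ ?_ ?_ ?_
      · rw [Npoly, zero_pow hq0, C_0]
        ring
      · rw [Dpoly, C_0]
        ring
      · have h : c ^ q * c - b ^ q * b = c ^ (q + 1) - b ^ (q + 1) := by ring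
        rw [h]
        exact sub_ne_zero_of_ne hne
      · rw [hqq b]
        ring
      · rw [hpq c, hpq b]
        ring
    · -- case (3)
      have he1 : d ^ q * b - a * c ^ q ≠ 0 := sub_ne_zero_of_ne h1
      have he2 : d ^ q * c - a * b ^ q ≠ 0 := sub_ne_zero_of_ne h2
      have hf1ne : d * b ^ q - a ^ q * c ≠ 0 := by
        rw [← hf1q]; exact pow_ne_zero q he1
      have he3 : d ^ (q + 1) - a ^ (q + 1) ≠ 0 := by
        intro h0
        rw [h0, zero_div, mul_zero] at heq
        rcases div_eq_zero_iff.mp heq.symm with hh | hh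
        · exact he2 hh
        · exact he1 hh
      have hrel1 : (d * c ^ q - a ^ q * b) * (d ^ (q + 1) - a ^ (q + 1))
          = (d ^ q * c - a * b ^ q) * (d * b ^ q - a ^ q * c) := by
        rw [div_pow, hf2q, hf1q, div_mul_div_comm,
          div_eq_div_iff (mul_ne_zero hf1ne he1) he1] at heq
        have h' : (d * c ^ q - a ^ q * b) * (d ^ (q + 1) - a ^ (q + 1))
            * (d ^ q * b - a * c ^ q)
            = (d ^ q * c - a * b ^ q) * (d * b ^ q - a ^ q * c)
            * (d ^ q * b - a * c ^ q) := by linear_combination heq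
        exact mul_right_cancel₀ he1 h'
      have hrel2 : (d * c ^ q - a ^ q * b) * (d ^ q * b - a * c ^ q)
          = (d ^ q * c - a * b ^ q) * (d ^ (q + 1) - a ^ (q + 1)) := by
        have h := congrArg (· ^ q) hrel1
        simp only [mul_pow] at h
        rw [hf2qq, he3q, hf2q, hf1qq] at h
        exact h.symm
      have hrel3 : (d * b ^ q - a ^ q * c) * (d ^ q * b - a * c ^ q)
          = (d ^ (q + 1) - a ^ (q + 1)) * (d ^ (q + 1) - a ^ (q + 1)) := by
        have h0 : (d ^ q * c - a * b ^ q) * ((d * b ^ q - a ^ q * c) * (d ^ q * b - a * c ^ q)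
            - (d ^ (q + 1) - a ^ (q + 1)) * (d ^ (q + 1) - a ^ (q + 1))) = 0 := by
          linear_combination (d ^ (q + 1) - a ^ (q + 1)) * hrel2
            - (d ^ q * b - a * c ^ q) * hrel1
        exact sub_eq_zero.mp ((mul_eq_zero.mp h0).resolve_left he2)
      exact Stmt0Proof.forward_dne0 q σ hσ hqq a b c d hd he1 he3 hrel2 hrel3
    · -- case (4)
      have he1 : d ^ q * b - a * c ^ q ≠ 0 := sub_ne_zero_of_ne h1
      have hdq : d ^ q ≠ 0 := pow_ne_zero q hd
      have hmu' : (b ^ q / d ^ q) ^ (q + 1) = 1 := hmu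
      have hb : b ≠ 0 := by
        intro h0
        rw [h0, zero_pow hq0, zero_div, zero_pow (Nat.succ_ne_zero q)] at hmu'
        exact zero_ne_one hmu'
      have hbq : b ^ q ≠ 0 := pow_ne_zero q hb
      have he3 : d ^ (q + 1) - a ^ (q + 1) ≠ 0 := by
        intro h0
        rw [h0, zero_div] at heq
        rcases div_eq_zero_iff.mp heq.symm with hh | hh
        · exact hbq hh
        · exact hdq hh
      have hG1 : (d ^ (q + 1) - a ^ (q + 1)) * d ^ q = b ^ q * (d ^ q * b - a * c ^ q) :=
        (div_eq_div_iff he1 hdq).mp heq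
      have hG2 : b ^ (q + 1) = d ^ (q + 1) := by
        rw [div_pow, hpq b, hpq d] at hmu'
        have hd1 : d ^ (q + 1) ≠ 0 := pow_ne_zero _ hd
        field_simp at hmu'
        exact hmu'
      have he2z : d ^ q * c - a * b ^ q = 0 := sub_eq_zero_of_eq h2
      have hf2z : d * c ^ q - a ^ q * b = 0 := by
        have h := hf2q
        rw [he2z, zero_pow hq0] at h
        exact h.symm
      have hrel2 : (d * c ^ q - a ^ q * b) * (d ^ q * b - a * c ^ q)
          = (d ^ q * c - a * b ^ q) * (d ^ (q + 1) - a ^ (q + 1)) := by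
        rw [hf2z, he2z, zero_mul, zero_mul]
      have hσG1 : (d ^ (q + 1) - a ^ (q + 1)) * d = b * (d * b ^ q - a ^ q * c) := by
        have h := congrArg (· ^ q) hG1
        simp only [mul_pow] at h
        rw [he3q, hqq d, hqq b, hf1q] at h
        exact h
      have hde : d * (d ^ q * b - a * c ^ q) = b * (d ^ (q + 1) - a ^ (q + 1)) := by
        have h0 : d ^ q * (d * (d ^ q * b - a * c ^ q) - b * (d ^ (q + 1) - a ^ (q + 1))) = 0 := by
          linear_combination (-b) * hG1 - (d ^ q * b - a * c ^ q) * hG2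
        exact sub_eq_zero.mp ((mul_eq_zero.mp h0).resolve_left hdq)
      have hrel3 : (d * b ^ q - a ^ q * c) * (d ^ q * b - a * c ^ q)
          = (d ^ (q + 1) - a ^ (q + 1)) * (d ^ (q + 1) - a ^ (q + 1)) := by
        have h0 : b * ((d * b ^ q - a ^ q * c) * (d ^ q * b - a * c ^ q)
            - (d ^ (q + 1) - a ^ (q + 1)) * (d ^ (q + 1) - a ^ (q + 1))) = 0 := by
          linear_combination (-(d ^ q * b - a * c ^ q)) * hσG1
            + (d ^ (q + 1) - a ^ (q + 1)) * hde
        exact sub_eq_zero.mp ((mul_eq_zero.mp h0).resolve_left hb)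
      exact Stmt0Proof.forward_dne0 q σ hσ hqq a b c d hd he1 he3 hrel2 hrel3
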